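/- Let F : Fin n₁ × Fin n₂ × Fin n₃ × Fin n₄ → ℂ be a fourth-order complex tensor, let (j₁,j₂,j₃,j₄) be a permutation of (1,2,3,4), and suppose the square unfolding matrix M with M((i_{j₁},i_{j₂}),(i_{j₃},i_{j₄})) = F(i₁,i₂,i₃,i₄) has rank r. Then F admits a CP decomposition with at most min(n_{j₁}, n_{j₂}) · min(n_{j₃}, n_{j₄}) · r terms. In particular, if n₁ ≤ n₂ ≤ n₃ ≤ n₄ then the CP-rank of F is at most n₁·n₃·r. -/

import Mathlib

lemma rank_fact {I J : Type*} [Fintype I] [Fintype J] [DecidableEq J] {r : ℕ}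
    (M : Matrix I J ℂ) (h : M.rank = r) :
    ∃ (C : I → Fin r → ℂ) (D : Fin r → J → ℂ), ∀ x y, M x y = ∑ t, C x t * D t y := by
  rw [Matrix.rank] at h
  let W := LinearMap.range M.mulVecLin
  have hW : Module.finrank ℂ W = r := h
  let b : Module.Basis (Fin r) ℂ W := Module.finBasisOfFinrankEq ℂ W hW
  have colmem : ∀ y : J, (fun x => M x y) ∈ W := by
    intro y
    refine ⟨Pi.single y 1, ?_⟩
    ext x
    simp [Matrix.mulVecLin]
  refine ⟨fun x t => (b t : I → ℂ) x, fun t y => b.repr ⟨fun x => M x y, colmem y⟩ t, ?_⟩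
  intro x y
  have := b.sum_repr ⟨fun x => M x y, colmem y⟩
  have h2 := congrFun (congrArg Subtype.val this) x
  simp only [AddSubmonoidClass.coe_finset_sum, SetLike.val_smul, Finset.sum_apply,
    Pi.smul_apply, smul_eq_mul] at h2
  rw [← h2]
  exact Finset.sum_congr rfl fun t _ => mul_comm _ _


lemma min_dec (p q : ℕ) (U : Fin p → Fin q → ℂ) :
    ∃ (a : Fin (min p q) → Fin p → ℂ) (b : Fin (min p q) → Fin q → ℂ),
      ∀ x y, U x y = ∑ s, a s x * b s y := by
  rcases le_total p q with h | h
  · have hm : min p q = p := min_eq_left h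
    refine ⟨fun s x => if x = Fin.cast hm s then 1 else 0,
      fun s y => U (Fin.cast hm s) y, fun x y => ?_⟩
    rw [← Equiv.sum_comp (finCongr hm.symm)
      (fun s => (if x = Fin.cast hm s then (1:ℂ) else 0) * U (Fin.cast hm s) y)]
    simp [Finset.sum_ite_eq, finCongr]
    rw [Finset.sum_eq_single x (fun b _ hb => by simp [Ne.symm hb]) (by simp)]; simp
  · have hm : min p q = q := min_eq_right h
    refine ⟨fun s x => U x (Fin.cast hm s),
      fun s y => if y = Fin.cast hm s then 1 else 0, fun x y => ?_⟩
    rw [← Equiv.sum_comp (finCongr hm.symm)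
      (fun s => U x (Fin.cast hm s) * if y = Fin.cast hm s then (1:ℂ) else 0)]
    simp [Finset.sum_ite_eq, finCongr]
    rw [Finset.sum_eq_single y (fun b _ hb => by simp [Ne.symm hb]) (by simp)]; simp


lemma cast_apply_eq {m : Fin 4 → ℕ} {j j' : Fin 4} (h : j' = j) (f : ∀ k, Fin (m k)) :
    Fin.cast (congrArg m h) (f j') = f j := by subst h; rfl

lemma fun_cast_eq {m : Fin 4 → ℕ} {R : ℕ} (b : ∀ j : Fin 4, Fin R → Fin (m j) → ℂ)
    {j j' : Fin 4} (h : j' = j) (p : Fin R) (y : Fin (m j)) :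
    b j' p (Fin.cast (congrArg m h).symm y) = b j p y := by subst h; rfl

lemma minmin {n : Fin 4 → ℕ} (h01 : n 0 ≤ n 1) (h12 : n 1 ≤ n 2) (h23 : n 2 ≤ n 3)
    (σ : Equiv.Perm (Fin 4)) :
    min (n (σ 0)) (n (σ 1)) * min (n (σ 2)) (n (σ 3)) ≤ n 0 * n 2 := by
  have hle2 : ∀ a : Fin 4, a ≠ 3 → n a ≤ n 2 := by
    intro a ha
    have hv : a.val = 0 ∨ a.val = 1 ∨ a.val = 2 := by
      have := a.isLt
      have : a.val ≠ 3 := fun h => ha (Fin.ext h)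
      omega
    rcases hv with hv | hv | hv
    · have : a = 0 := Fin.ext (by simp [hv])
      rw [this]; exact h01.trans h12
    · have : a = 1 := Fin.ext (by simp [hv])
      rw [this]; exact h12
    · have : a = 2 := Fin.ext (by simp [hv])
      rw [this]
  have pairle : ∀ u v : Fin 4, u ≠ v → min (n u) (n v) ≤ n 2 := by
    intro u v huv
    have : u ≠ 3 ∨ v ≠ 3 := by
      by_contra hc
      push_neg at hc
      exact huv (hc.1.trans hc.2.symm)
    rcases this with h | h
    · exact le_trans (min_le_left _ _) (hle2 u h)
    · exact le_trans (min_le_right _ _) (hle2 v h)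
  have hne01 : σ 0 ≠ σ 1 := fun h => absurd (σ.injective h) (by decide)
  have hne23 : σ 2 ≠ σ 3 := fun h => absurd (σ.injective h) (by decide)
  have h0 : σ 0 = 0 ∨ σ 1 = 0 ∨ σ 2 = 0 ∨ σ 3 = 0 := by
    obtain ⟨j, hj⟩ := σ.surjective 0
    rcases j with ⟨jv, hjv⟩
    interval_cases jv
    · exact Or.inl hj
    · exact Or.inr (Or.inl hj)
    · exact Or.inr (Or.inr (Or.inl hj))
    · exact Or.inr (Or.inr (Or.inr hj))
  rcases h0 with h | h | h | h
  · exact Nat.mul_le_mul (le_trans (min_le_left _ _) (by rw [h])) (pairle _ _ hne23)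
  · exact Nat.mul_le_mul (le_trans (min_le_right _ _) (by rw [h])) (pairle _ _ hne23)
  · rw [Nat.mul_comm (n 0) (n 2)]
    exact Nat.mul_le_mul (pairle _ _ hne01) (le_trans (min_le_left _ _) (by rw [h]))
  · rw [Nat.mul_comm (n 0) (n 2)]
    exact Nat.mul_le_mul (pairle _ _ hne01) (le_trans (min_le_right _ _) (by rw [h]))

lemma key {r : ℕ} {m : Fin 4 → ℕ} (G : (∀ k : Fin 4, Fin (m k)) → ℂ)
    (M : Matrix (Fin (m 0) × Fin (m 1)) (Fin (m 2) × Fin (m 3)) ℂ)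
    (hM : ∀ i : ∀ k : Fin 4, Fin (m k), M (i 0, i 1) (i 2, i 3) = G i)
    (h : M.rank = r) :
    ∃ a : (k : Fin 4) → Fin (min (m 0) (m 1) * min (m 2) (m 3) * r) → Fin (m k) → ℂ,
      ∀ i : ∀ k : Fin 4, Fin (m k), G i = ∑ p, ∏ k, a k p (i k) := by
  obtain ⟨C, D, hCD⟩ := rank_fact M h
  choose A B hAB using fun t : Fin r => min_dec (m 0) (m 1) (fun x y => C (x, y) t)
  choose P Q hPQ using fun t : Fin r => min_dec (m 2) (m 3) (fun z w => D t (z, w))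
  let e : Fin (min (m 0) (m 1) * min (m 2) (m 3) * r) ≃ (Fin (min (m 0) (m 1)) × Fin (min (m 2) (m 3))) × Fin r :=
    finProdFinEquiv.symm.trans (Equiv.prodCongr finProdFinEquiv.symm (Equiv.refl _))
  refine ⟨fun k => match k with
    | ⟨0, _⟩ => fun p x => A (e p).2 (e p).1.1 x
    | ⟨1, _⟩ => fun p x => B (e p).2 (e p).1.1 x
    | ⟨2, _⟩ => fun p x => P (e p).2 (e p).1.2 x
    | ⟨3, _⟩ => fun p x => Q (e p).2 (e p).1.2 x, ?_⟩
  intro i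
  have expand : ∀ p : Fin (min (m 0) (m 1) * min (m 2) (m 3) * r),
      (∏ k : Fin 4, (match k with
        | ⟨0, _⟩ => fun p x => A (e p).2 (e p).1.1 x
        | ⟨1, _⟩ => fun p x => B (e p).2 (e p).1.1 x
        | ⟨2, _⟩ => fun p x => P (e p).2 (e p).1.2 x
        | ⟨3, _⟩ => fun p x => Q (e p).2 (e p).1.2 x : Fin (min (m 0) (m 1) * min (m 2) (m 3) * r) → Fin (m k) → ℂ) p (i k))
      = A (e p).2 (e p).1.1 (i 0) * B (e p).2 (e p).1.1 (i 1) *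
        P (e p).2 (e p).1.2 (i 2) * Q (e p).2 (e p).1.2 (i 3) := by
    intro p
    rw [Fin.prod_univ_four]
  rw [Finset.sum_congr rfl fun p _ => expand p]
  rw [Equiv.sum_comp e (fun q : (Fin (min (m 0) (m 1)) × Fin (min (m 2) (m 3))) × Fin r =>
    A q.2 q.1.1 (i 0) * B q.2 q.1.1 (i 1) * P q.2 q.1.2 (i 2) * Q q.2 q.1.2 (i 3))]
  rw [← hM i, hCD]
  have step1 : ∀ t : Fin r, C (i 0, i 1) t * D t (i 2, i 3)
      = ∑ sp : Fin (min (m 0) (m 1)) × Fin (min (m 2) (m 3)),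
          A t sp.1 (i 0) * B t sp.1 (i 1) * P t sp.2 (i 2) * Q t sp.2 (i 3) := by
    intro t
    rw [hAB t (i 0) (i 1), hPQ t (i 2) (i 3), Finset.sum_mul_sum,
      Fintype.sum_prod_type]
    exact Finset.sum_congr rfl fun s _ => Finset.sum_congr rfl fun s' _ => by ring
  rw [Finset.sum_congr rfl fun t _ => step1 t]
  rw [Finset.sum_comm]
  exact (Fintype.sum_prod_type (fun q : (Fin (min (m 0) (m 1)) × Fin (min (m 2) (m 3))) × Fin r =>
    A q.2 q.1.1 (i 0) * B q.2 q.1.1 (i 1) * P q.2 q.1.2 (i 2) * Q q.2 q.1.2 (i 3))).symm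


/-- If some square unfolding of a fourth-order tensor `F` (grouping modes `(σ 0, σ 1)`
against `(σ 2, σ 3)`) has rank `r`, then `F` admits a CP decomposition with at most
`min(n_{σ0}, n_{σ1}) · min(n_{σ2}, n_{σ3}) · r` terms.  In particular, if
`n₁ ≤ n₂ ≤ n₃ ≤ n₄` then the CP-rank of `F` is at most `n₁ · n₃ · r`. -/
theorem stmt_8 {r : ℕ} {n : Fin 4 → ℕ}
    (F : (∀ k : Fin 4, Fin (n k)) → ℂ)
    (σ : Equiv.Perm (Fin 4))
    (M : Matrix (Fin (n (σ 0)) × Fin (n (σ 1))) (Fin (n (σ 2)) × Fin (n (σ 3))) ℂ)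
    (hM : ∀ i : ∀ k : Fin 4, Fin (n k), M (i (σ 0), i (σ 1)) (i (σ 2), i (σ 3)) = F i)
    (hrank : M.rank = r) :
    (∃ R : ℕ, R ≤ min (n (σ 0)) (n (σ 1)) * min (n (σ 2)) (n (σ 3)) * r ∧
      ∃ a : (k : Fin 4) → Fin R → Fin (n k) → ℂ,
        ∀ i : ∀ k : Fin 4, Fin (n k), F i = ∑ p : Fin R, ∏ k, a k p (i k)) ∧
    (n 0 ≤ n 1 → n 1 ≤ n 2 → n 2 ≤ n 3 →
      sInf {s : ℕ | ∃ a : (k : Fin 4) → Fin s → Fin (n k) → ℂ,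
          ∀ i : ∀ k : Fin 4, Fin (n k), F i = ∑ p : Fin s, ∏ k, a k p (i k)}
        ≤ n 0 * n 2 * r) := by
  have main : ∃ a : (k : Fin 4) →
      Fin (min (n (σ 0)) (n (σ 1)) * min (n (σ 2)) (n (σ 3)) * r) → Fin (n k) → ℂ,
      ∀ i : ∀ k : Fin 4, Fin (n k), F i = ∑ p, ∏ k, a k p (i k) := by
    set m : Fin 4 → ℕ := fun j => n (σ j) with hm
    let G : (∀ j : Fin 4, Fin (m j)) → ℂ := fun x =>
      F (fun k => Fin.cast (congrArg n (σ.apply_symm_apply k)) (x (σ.symm k)))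
    have hMG : ∀ x : ∀ j : Fin 4, Fin (m j), M (x 0, x 1) (x 2, x 3) = G x := by
      intro x
      have hx : ∀ j : Fin 4,
          Fin.cast (congrArg n (σ.apply_symm_apply (σ j))) (x (σ.symm (σ j))) = x j := by
        intro j
        exact cast_apply_eq (m := m) (σ.symm_apply_apply j) x
      have := hM (fun k => Fin.cast (congrArg n (σ.apply_symm_apply k)) (x (σ.symm k)))
      rw [hx 0, hx 1, hx 2, hx 3] at this
      exact this
    obtain ⟨b, hb⟩ := key G M hMG hrank
    refine ⟨fun k p y => b (σ.symm k) p
      (Fin.cast (congrArg n (σ.apply_symm_apply k)).symm y), ?_⟩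
    intro i
    have hxi : ∀ k : Fin 4,
        Fin.cast (congrArg n (σ.apply_symm_apply k)) ((fun j => i (σ j)) (σ.symm k)) = i k := by
      intro k
      exact cast_apply_eq (m := n) (σ.apply_symm_apply k) i
    have hFG : F i = G (fun j => i (σ j)) := by
      show F i = F _
      congr 1
      funext k
      exact (hxi k).symm
    rw [hFG, hb (fun j => i (σ j))]
    refine Finset.sum_congr rfl fun p _ => ?_
    rw [← Equiv.prod_comp σ (fun k => b (σ.symm k) p
      (Fin.cast (congrArg n (σ.apply_symm_apply k)).symm (i k)))]
    refine Finset.prod_congr rfl fun j _ => ?_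
    exact (fun_cast_eq (m := m) b (σ.symm_apply_apply j) p (i (σ j))).symm
  constructor
  · exact ⟨_, le_refl _, main⟩
  · intro h01 h12 h23
    obtain ⟨a, ha⟩ := main
    refine le_trans (Nat.sInf_le ⟨a, ha⟩) ?_
    exact Nat.mul_le_mul_right r (minmin h01 h12 h23 σ)
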